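/- For every x ∈ ℝⁿ, the biconjugate of f(x) = G(card(x)) + ‖x‖² satisfies f**(x) = sup { 2⟨x̃, z̃⟩ − Σ_{i=1}^n max(z̃_i² − g_i, 0) : z̃ ∈ ℝⁿ with z̃_1 ≥ z̃_2 ≥ ⋯ ≥ z̃_n ≥ 0 }, where x̃ denotes the sorted magnitudes of x and a summand with g_i = +∞ is interpreted as 0. -/

import Mathlib

open scoped RealInnerProductSpace ENNReal
noncomputable section

/-- `ℝⁿ` with the Euclidean inner product and norm. -/
abbrev Evec (n : ℕ) := EuclideanSpace ℝ (Fin n)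

/-- The number of nonzero entries of a vector. -/
def spcard {n : ℕ} (x : Evec n) : ℕ := (Finset.univ.filter (fun i => x i ≠ 0)).card

/-- The absolute values of the entries of `x` sorted in nonincreasing order,
as a `1`-based function on `ℕ` (with value `0` outside `{1,…,n}`, so the
convention `x̃_{n+1} = 0` is built in). -/
def sortedAbs {n : ℕ} (x : Evec n) : ℕ → ℝ :=
  fun j => if h : 1 ≤ j ∧ j ≤ n then
    |x ((Tuple.sort (fun i : Fin n => -|x i|)) ⟨j - 1, by omega⟩)| else 0

/-- `G(k) = ∑_{i=1}^k g_i`. -/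
def Gsum (g : ℕ → ℝ≥0∞) (k : ℕ) : ℝ≥0∞ := ∑ i ∈ Finset.Icc 1 k, g i

/-- `f(x) = G(card x) + ‖x‖²`, valued in `EReal`. -/
def fobj {n : ℕ} (g : ℕ → ℝ≥0∞) (x : Evec n) : EReal :=
  ((Gsum g (spcard x) : ℝ≥0∞) : EReal) + ((‖x‖ ^ 2 : ℝ) : EReal)

/-- The convex conjugate `f*` of `f`. -/
def fconj {n : ℕ} (g : ℕ → ℝ≥0∞) (y : Evec n) : EReal :=
  ⨆ x : Evec n, ((⟪x, y⟫ : ℝ) : EReal) - fobj g x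

/-- The biconjugate (convex envelope) `f**` of `f`. -/
def fbiconj {n : ℕ} (g : ℕ → ℝ≥0∞) (x : Evec n) : EReal :=
  ⨆ y : Evec n, ((⟪x, y⟫ : ℝ) : EReal) - fconj g y

/-- `v` is a subgradient of `f**` at `x`. -/
def IsSubgrad {n : ℕ} (g : ℕ → ℝ≥0∞) (v x : Evec n) : Prop :=
  ∀ w : Evec n, fbiconj g x + ((⟪v, w - x⟫ : ℝ) : EReal) ≤ fbiconj g w

/-- `z = (I − AᵀA)x + Aᵀb`. -/
def zvec {n m : ℕ} (A : Evec n →L[ℝ] Evec m) (b : Evec m) (x : Evec n) : Evec n :=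
  x - ContinuousLinearMap.adjoint A (A x) + ContinuousLinearMap.adjoint A b

/-- `x` is a stationary point of the relaxation `R_g(·) + ‖A·−b‖²`:
`2z` is a subgradient of `f**` at `x`, where `z = (I − AᵀA)x + Aᵀb`. -/
def IsStationaryPt {n m : ℕ} (g : ℕ → ℝ≥0∞) (A : Evec n →L[ℝ] Evec m) (b : Evec m)
    (x : Evec n) : Prop :=
  IsSubgrad g ((2 : ℝ) • zvec A b x) x

/-- `A` satisfies the RIP of order `r` with constant `δ`. -/
def RIP {n m : ℕ} (A : Evec n →L[ℝ] Evec m) (r : ℕ) (δ : ℝ) : Prop :=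
  ∀ w : Evec n, spcard w ≤ r →
    (1 - δ) * ‖w‖ ^ 2 ≤ ‖A w‖ ^ 2 ∧ ‖A w‖ ^ 2 ≤ (1 + δ) * ‖w‖ ^ 2

/-- Square root on `[0,∞]`, with `√(+∞) = +∞`. -/
def sqrtE (a : ℝ≥0∞) : ℝ≥0∞ := a ^ (1 / 2 : ℝ)

/-- The relaxed objective `R_g(x) + ‖Ax − b‖²`, where `R_g(x) = f**(x) − ‖x‖²`. -/
def relaxObj {n m : ℕ} (g : ℕ → ℝ≥0∞) (A : Evec n →L[ℝ] Evec m) (b : Evec m)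
    (x : Evec n) : EReal :=
  (fbiconj g x - ((‖x‖ ^ 2 : ℝ) : EReal)) + ((‖A x - b‖ ^ 2 : ℝ) : EReal)

/-- The original (unrelaxed) objective `G(card(x)) + ‖Ax − b‖²`. -/
def origObj {n m : ℕ} (g : ℕ → ℝ≥0∞) (A : Evec n →L[ℝ] Evec m) (b : Evec m)
    (x : Evec n) : EReal :=
  ((Gsum g (spcard x) : ℝ≥0∞) : EReal) + ((‖A x - b‖ ^ 2 : ℝ) : EReal)

/-- `x` is a local minimizer of `F`. -/
def IsLocalMinimizer {n : ℕ} (F : Evec n → EReal) (x : Evec n) : Prop :=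
  ∃ U ∈ nhds x, ∀ w ∈ U, F x ≤ F w


namespace BiconjAux

open Finset

variable {n : ℕ}

lemma sortedAbs_apply (x : Evec n) (j : Fin n) :
    sortedAbs x ((j : ℕ) + 1) = |x ((Tuple.sort fun i : Fin n => -|x i|) j)| := by
  have h : 1 ≤ (j : ℕ) + 1 ∧ (j : ℕ) + 1 ≤ n := ⟨Nat.le_add_left _ _, j.isLt⟩
  rw [sortedAbs, dif_pos h]
  rfl

lemma sortedAbs_antitone (x : Evec n) :
    Antitone fun j : Fin n => sortedAbs x ((j : ℕ) + 1) := by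
  have h := Tuple.monotone_sort (fun i : Fin n => -|x i|)
  intro i j hij
  show sortedAbs x ((j : ℕ) + 1) ≤ sortedAbs x ((i : ℕ) + 1)
  rw [sortedAbs_apply, sortedAbs_apply]
  have := h hij
  simp only [Function.comp_apply] at this
  linarith

lemma inner_eq (x y : Evec n) : ⟪x, y⟫ = ∑ i, x i * y i := by
  simp [PiLp.inner_apply]
  exact Finset.sum_congr rfl fun i _ => mul_comm _ _

lemma norm_sq_eq (x : Evec n) : ‖x‖ ^ 2 = ∑ i, x i ^ 2 := by
  rw [EuclideanSpace.norm_sq_eq]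
  simp [sq_abs]

/-- The finite sum appearing on the right-hand side. -/
def posP (g : ℕ → ℝ≥0∞) (z : Fin n → ℝ) : ℝ :=
  ∑ i : Fin n, if g ((i : ℕ) + 1) = ⊤ then (0 : ℝ)
    else max ((z i) ^ 2 - (g ((i : ℕ) + 1)).toReal) 0

lemma le_of_strictMono {m : ℕ} (v : Fin m → Fin n) (hv : StrictMono v) (i : Fin m) :
    (i : ℕ) ≤ (v i : ℕ) := by
  have h := Finset.card_le_card_of_injOn (s := Finset.Iic i) (t := Finset.Iic (v i)) v
    (fun j hj => Finset.mem_Iic.2 (hv.monotone (Finset.mem_Iic.1 hj))) hv.injective.injOn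
  rw [Fin.card_Iic, Fin.card_Iic] at h
  omega

lemma sum_le_topk (w : Fin n → ℝ) (hw : Antitone w) (T : Finset (Fin n)) :
    ∑ j ∈ T, w j ≤ ∑ j ∈ Finset.univ.filter fun j : Fin n => (j : ℕ) < T.card, w j := by
  have hmn : T.card ≤ n := by simpa using Finset.card_le_card T.subset_univ
  set m := T.card with hm
  let e := T.orderEmbOfFin (k := m) rfl
  have hTmap : Finset.univ.map e.toEmbedding = T := by
    apply Finset.eq_of_subset_of_card_le
    · intro j hj
      obtain ⟨i, -, rfl⟩ := Finset.mem_map.1 hj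
      exact T.orderEmbOfFin_mem rfl i
    · simp [hm]
  have h1 : ∑ j ∈ T, w j = ∑ i : Fin m, w (e i) := by
    rw [← hTmap, Finset.sum_map]; rfl
  have hset : Finset.univ.map (Fin.castLEEmb hmn) =
      Finset.univ.filter fun j : Fin n => (j : ℕ) < m := by
    ext j
    simp only [Finset.mem_map, Finset.mem_univ, true_and, Finset.mem_filter,
      Fin.coe_castLEEmb]
    constructor
    · rintro ⟨i, rfl⟩; simpa using i.isLt
    · intro hj; exact ⟨⟨(j : ℕ), hj⟩, Fin.ext (by simp)⟩
  have h2 : ∀ i : Fin m, w (e i) ≤ w (Fin.castLE hmn i) := fun i =>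
    hw (by rw [Fin.le_def]; simpa using le_of_strictMono _ e.strictMono i)
  calc ∑ j ∈ T, w j = ∑ i : Fin m, w (e i) := h1
    _ ≤ ∑ i : Fin m, w (Fin.castLE hmn i) := Finset.sum_le_sum fun i _ => h2 i
    _ = _ := by rw [← hset, Finset.sum_map]; rfl

lemma sum_Icc_eq {M : Type*} [AddCommMonoid M] (h : ℕ → M) {k : ℕ} (hk : k ≤ n) :
    ∑ j ∈ Finset.Icc 1 k, h j
      = ∑ i ∈ Finset.univ.filter fun i : Fin n => (i : ℕ) < k, h ((i : ℕ) + 1) := by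
  rcases Nat.eq_zero_or_pos n with rfl | hn
  · have hk0 : k = 0 := Nat.le_zero.1 hk
    subst hk0; simp
  refine Finset.sum_nbij' (i := fun j => (⟨(j - 1) % n, Nat.mod_lt _ hn⟩ : Fin n))
    (j := fun i => (i : ℕ) + 1) ?_ ?_ ?_ ?_ ?_
  · intro a ha
    simp only [Finset.mem_Icc] at ha
    have hmod : (a - 1) % n = a - 1 := Nat.mod_eq_of_lt (by omega)
    simp only [Finset.mem_filter, Finset.mem_univ, true_and, hmod]
    omega
  · intro a ha
    simp only [Finset.mem_filter, Finset.mem_univ, true_and] at ha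
    simp only [Finset.mem_Icc]; omega
  · intro a ha
    simp only [Finset.mem_Icc] at ha
    have hmod : (a - 1) % n = a - 1 := Nat.mod_eq_of_lt (by omega)
    simp only [hmod]
    omega
  · intro a ha
    apply Fin.ext
    simp [Nat.mod_eq_of_lt a.isLt]
  · intro a ha
    simp only [Finset.mem_Icc] at ha
    have hmod : (a - 1) % n = a - 1 := Nat.mod_eq_of_lt (by omega)
    congr 1
    simp only [hmod]
    omega

lemma Gsum_mono (g : ℕ → ℝ≥0∞) : Monotone (Gsum g) := fun _ _ hab =>
  Finset.sum_le_sum_of_subset (Finset.Icc_subset_Icc_right hab)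

lemma mem_iff_lt_card (T : Finset (Fin n))
    (hT : ∀ ⦃i j : Fin n⦄, i ≤ j → j ∈ T → i ∈ T) (i : Fin n) :
    i ∈ T ↔ (i : ℕ) < T.card := by
  constructor
  · intro hi
    have h : Finset.Iic i ⊆ T := fun j hj => hT (Finset.mem_Iic.1 hj) hi
    have := Finset.card_le_card h
    rw [Fin.card_Iic] at this; omega
  · intro hi
    by_contra hmem
    have h : T ⊆ Finset.Iio i := fun j hj =>
      Finset.mem_Iio.2 (lt_of_not_ge fun hij => hmem (hT hij hj))
    have := Finset.card_le_card h
    rw [Fin.card_Iio] at this; omega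

lemma spcard_le (x : Evec n) : spcard x ≤ n := by
  rw [spcard]
  simpa using Finset.card_filter_le Finset.univ (fun i : Fin n => x i ≠ 0)

lemma coe_ennreal_eq_toReal {a : ℝ≥0∞} (ha : a ≠ ⊤) :
    ((a : ℝ≥0∞) : EReal) = ((a.toReal : ℝ) : EReal) := by
  have h1 : ((a : ℝ≥0∞) : EReal) ≠ ⊤ := by rwa [ne_eq, EReal.coe_ennreal_eq_top_iff]
  have h2 : ((a : ℝ≥0∞) : EReal) ≠ ⊥ :=
    (lt_of_lt_of_le EReal.bot_lt_zero (EReal.coe_ennreal_nonneg _)).ne'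
  rw [← EReal.toReal_coe_ennreal, EReal.coe_toReal h1 h2]

lemma fconj_le_posP (g : ℕ → ℝ≥0∞) (y : Evec n) (z : Fin n → ℝ) (hz : Antitone z)
    (hz0 : ∀ i, 0 ≤ z i) (π : Equiv.Perm (Fin n)) (hy : ∀ i, |y i| = 2 * z (π i)) :
    fconj g y ≤ ((posP g z : ℝ) : EReal) := by
  rw [fconj]
  apply iSup_le
  intro x
  by_cases hG : Gsum g (spcard x) = ⊤
  · rw [fobj, hG]
    rw [EReal.coe_ennreal_top, EReal.top_add_coe, EReal.sub_top]
    exact bot_le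
  · set k := spcard x with hk
    have hkn : k ≤ n := spcard_le x
    set r := (Gsum g k).toReal with hr
    have hfobj : fobj g x = (((r + ‖x‖ ^ 2 : ℝ)) : EReal) := by
      rw [fobj, ← hk, coe_ennreal_eq_toReal hG, ← EReal.coe_add, ← hr]
    rw [hfobj, ← EReal.coe_sub, EReal.coe_le_coe_iff]
    set S := Finset.univ.filter (fun i : Fin n => x i ≠ 0) with hS
    have hcardS : S.card = k := rfl
    have hn : ‖x‖ ^ 2 = ∑ i : Fin n, x i ^ 2 := norm_sq_eq x
    have h1 : ⟪x, y⟫ ≤ ∑ i : Fin n, x i ^ 2 + ∑ i ∈ S, z (π i) ^ 2 := by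
      rw [inner_eq]
      calc ∑ i : Fin n, x i * y i = ∑ i ∈ S, x i * y i := by
            rw [← Finset.sum_subset S.subset_univ]
            intro i _ hi
            have hxi : x i = 0 := by
              by_contra hne
              exact hi (Finset.mem_filter.2 ⟨Finset.mem_univ i, hne⟩)
            rw [hxi, zero_mul]
        _ ≤ ∑ i ∈ S, (x i ^ 2 + z (π i) ^ 2) := by
            apply Finset.sum_le_sum
            intro i _
            have hb := hz0 (π i)
            have hxy : x i * y i ≤ |x i| * |y i| := by
              rw [← abs_mul]; exact le_abs_self _
            rw [hy i] at hxy
            nlinarith [sq_nonneg (|x i| - z (π i)), sq_abs (x i)]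
        _ = ∑ i ∈ S, x i ^ 2 + ∑ i ∈ S, z (π i) ^ 2 := Finset.sum_add_distrib
        _ ≤ _ := add_le_add_left
            (Finset.sum_le_sum_of_subset_of_nonneg S.subset_univ
              (fun i _ _ => sq_nonneg _)) _
    have h2 : ∑ i ∈ S, z (π i) ^ 2
        ≤ ∑ i ∈ Finset.univ.filter fun i : Fin n => (i : ℕ) < k, z i ^ 2 := by
      have himg : ∑ j ∈ S.image π, z j ^ 2 = ∑ i ∈ S, z (π i) ^ 2 :=
        Finset.sum_image (fun a _ b _ hab => π.injective hab)
      rw [← himg]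
      have hcard : (S.image π).card = k := by
        rw [Finset.card_image_of_injective _ π.injective, hcardS]
      have htop := sum_le_topk (fun i => z i ^ 2)
        (fun i j hij => by
          have h1 := hz hij
          have h2 := hz0 j
          dsimp only
          nlinarith) (S.image π)
      rwa [hcard] at htop
    have hfin : ∀ j ∈ Finset.Icc 1 k, g j ≠ ⊤ := by
      intro j hj hj'
      exact hG (by rw [Gsum]; exact (ENNReal.sum_eq_top).2 ⟨j, hj, hj'⟩)
    have h3 : r = ∑ i ∈ Finset.univ.filter fun i : Fin n => (i : ℕ) < k,
        (g ((i : ℕ) + 1)).toReal := by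
      rw [hr, Gsum, ENNReal.toReal_sum hfin, sum_Icc_eq _ hkn]
    have h4 : ∑ i ∈ Finset.univ.filter (fun i : Fin n => (i : ℕ) < k),
        (z i ^ 2 - (g ((i : ℕ) + 1)).toReal) ≤ posP g z := by
      rw [posP]
      calc ∑ i ∈ Finset.univ.filter (fun i : Fin n => (i : ℕ) < k),
          (z i ^ 2 - (g ((i : ℕ) + 1)).toReal)
          ≤ ∑ i ∈ Finset.univ.filter (fun i : Fin n => (i : ℕ) < k),
            (if g ((i : ℕ) + 1) = ⊤ then (0 : ℝ)
              else max ((z i) ^ 2 - (g ((i : ℕ) + 1)).toReal) 0) := by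
            apply Finset.sum_le_sum
            intro i hi
            have hik : (i : ℕ) < k := (Finset.mem_filter.1 hi).2
            have hgi : g ((i : ℕ) + 1) ≠ ⊤ :=
              hfin _ (Finset.mem_Icc.2 ⟨Nat.le_add_left _ _, by omega⟩)
            rw [if_neg hgi]
            exact le_max_left _ _
        _ ≤ _ := Finset.sum_le_sum_of_subset_of_nonneg (Finset.filter_subset _ _)
            (fun i _ _ => by
              split
              · exact le_rfl
              · exact le_max_right _ _)
    have h5 : ∑ i ∈ Finset.univ.filter (fun i : Fin n => (i : ℕ) < k),
        (z i ^ 2 - (g ((i : ℕ) + 1)).toReal)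
        = ∑ i ∈ Finset.univ.filter (fun i : Fin n => (i : ℕ) < k), z i ^ 2
          - ∑ i ∈ Finset.univ.filter (fun i : Fin n => (i : ℕ) < k),
            (g ((i : ℕ) + 1)).toReal := Finset.sum_sub_distrib _ _
    linarith

lemma posP_le_fconj (g : ℕ → ℝ≥0∞) (hgmono : Monotone g) (y : Evec n) (z : Fin n → ℝ)
    (hz : Antitone z) (hz0 : ∀ i, 0 ≤ z i) (π : Equiv.Perm (Fin n))
    (hy : ∀ i, |y i| = 2 * z (π i)) :
    ((posP g z : ℝ) : EReal) ≤ fconj g y := by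
  classical
  set T := Finset.univ.filter
    (fun i : Fin n => g ((i : ℕ) + 1) ≠ ⊤ ∧ (g ((i : ℕ) + 1)).toReal < z i ^ 2) with hT
  have hTdc : ∀ ⦃i j : Fin n⦄, i ≤ j → j ∈ T → i ∈ T := by
    intro i j hij hj
    simp only [hT, Finset.mem_filter, Finset.mem_univ, true_and] at hj ⊢
    have hij' : (i : ℕ) + 1 ≤ (j : ℕ) + 1 := by
      have := Fin.le_def.1 hij; omega
    have hg : g ((i : ℕ) + 1) ≤ g ((j : ℕ) + 1) := hgmono hij'
    have hzz : z j ^ 2 ≤ z i ^ 2 := by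
      have h1 := hz hij
      have h2 := hz0 j
      nlinarith
    exact ⟨ne_top_of_le_ne_top hj.1 hg,
      lt_of_le_of_lt (ENNReal.toReal_mono hj.1 hg) (lt_of_lt_of_le hj.2 hzz)⟩
  set k := T.card with hkdef
  have hkn : k ≤ n := by simpa using Finset.card_le_card T.subset_univ
  have hmem : ∀ i : Fin n, i ∈ T ↔ (i : ℕ) < k := mem_iff_lt_card T hTdc
  set x' : Evec n := WithLp.toLp 2 (fun i => if π i ∈ T then y i / 2 else 0 : Fin n → ℝ) with hx'
  have hfilT : Finset.univ.filter (fun i : Fin n => π i ∈ T) = T.image π.symm := by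
    ext j
    simp only [Finset.mem_filter, Finset.mem_univ, true_and, Finset.mem_image]
    constructor
    · intro hj; exact ⟨π j, hj, π.symm_apply_apply j⟩
    · rintro ⟨t, ht, rfl⟩; rwa [π.apply_symm_apply]
  have hsupp : spcard x' ≤ k := by
    rw [spcard]
    have hsub : Finset.univ.filter (fun i => x' i ≠ 0)
        ⊆ Finset.univ.filter (fun i : Fin n => π i ∈ T) := by
      intro i hi
      simp only [Finset.mem_filter, Finset.mem_univ, true_and] at hi ⊢
      by_contra hmem'
      exact hi (by rw [hx']; simp [hmem'])
    calc (Finset.univ.filter (fun i => x' i ≠ 0)).card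
        ≤ (Finset.univ.filter (fun i : Fin n => π i ∈ T)).card := Finset.card_le_card hsub
      _ = k := by rw [hfilT, Finset.card_image_of_injective _ π.symm.injective]
  have hfinT : ∀ i ∈ T, g ((i : ℕ) + 1) ≠ ⊤ := by
    intro i hi
    exact ((Finset.mem_filter.1 hi).2).1
  have hTfil : T = Finset.univ.filter (fun i : Fin n => (i : ℕ) < k) := by
    ext i
    simp only [Finset.mem_filter, Finset.mem_univ, true_and]
    rw [← hmem i]
  have hGk : Gsum g k = ∑ i ∈ T, g ((i : ℕ) + 1) := by
    rw [Gsum, sum_Icc_eq g hkn, ← hTfil]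
  have hGkfin : Gsum g k ≠ ⊤ := by
    rw [hGk]
    exact fun hc => by
      obtain ⟨i, hi, hi'⟩ := (ENNReal.sum_eq_top).1 hc
      exact hfinT i hi hi'
  set R : ℝ := ∑ i ∈ T, (g ((i : ℕ) + 1)).toReal with hR
  have hGkR : (Gsum g k).toReal = R := by
    rw [hGk, ENNReal.toReal_sum hfinT]
  -- bound fobj g x'
  have hfobj : fobj g x' ≤ (((R + ‖x'‖ ^ 2 : ℝ)) : EReal) := by
    rw [fobj, EReal.coe_add]
    apply add_le_add_left
    calc ((Gsum g (spcard x') : ℝ≥0∞) : EReal) ≤ ((Gsum g k : ℝ≥0∞) : EReal) :=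
          EReal.coe_ennreal_le_coe_ennreal_iff.2 (Gsum_mono g hsupp)
      _ = ((R : ℝ) : EReal) := by rw [coe_ennreal_eq_toReal hGkfin, hGkR]
  -- compute the inner product and norm of x'
  have hyy : ∀ i : Fin n, y i * y i = 4 * z (π i) ^ 2 := by
    intro i
    have : |y i| * |y i| = (2 * z (π i)) * (2 * z (π i)) := by rw [hy i]
    rw [abs_mul_abs_self] at this
    rw [this]; ring
  have hinner : ⟪x', y⟫ = ∑ i ∈ Finset.univ.filter (fun i : Fin n => π i ∈ T),
      2 * z (π i) ^ 2 := by
    rw [inner_eq]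
    rw [← Finset.sum_filter_add_sum_filter_not Finset.univ (fun i : Fin n => π i ∈ T)
      (fun i => x' i * y i)]
    have hzero : ∑ i ∈ Finset.univ.filter (fun i : Fin n => ¬ π i ∈ T),
        x' i * y i = 0 := by
      apply Finset.sum_eq_zero
      intro i hi
      have := (Finset.mem_filter.1 hi).2
      rw [hx']
      simp [this]
    rw [hzero, add_zero]
    apply Finset.sum_congr rfl
    intro i hi
    have hmem' := (Finset.mem_filter.1 hi).2
    rw [hx']
    simp only [PiLp.toLp_apply, hmem', if_true]
    have := hyy i
    nlinarith [hyy i]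
  have hnorm : ‖x'‖ ^ 2 = ∑ i ∈ Finset.univ.filter (fun i : Fin n => π i ∈ T),
      z (π i) ^ 2 := by
    rw [norm_sq_eq]
    rw [← Finset.sum_filter_add_sum_filter_not Finset.univ (fun i : Fin n => π i ∈ T)
      (fun i => x' i ^ 2)]
    have hzero : ∑ i ∈ Finset.univ.filter (fun i : Fin n => ¬ π i ∈ T),
        x' i ^ 2 = 0 := by
      apply Finset.sum_eq_zero
      intro i hi
      have := (Finset.mem_filter.1 hi).2
      rw [hx']
      simp [this]
    rw [hzero, add_zero]
    apply Finset.sum_congr rfl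
    intro i hi
    have hmem' := (Finset.mem_filter.1 hi).2
    rw [hx']
    simp only [PiLp.toLp_apply, hmem', if_true]
    have := hyy i
    nlinarith [hyy i]
  have hsumT : ∀ (c : Fin n → ℝ),
      ∑ i ∈ Finset.univ.filter (fun i : Fin n => π i ∈ T), c (π i) = ∑ j ∈ T, c j := by
    intro c
    rw [hfilT]
    rw [Finset.sum_image (fun a _ b _ hab => π.symm.injective hab)]
    apply Finset.sum_congr rfl
    intro j hj
    rw [π.apply_symm_apply]
  have hposP : posP g z = ∑ i ∈ T, (z i ^ 2 - (g ((i : ℕ) + 1)).toReal) := by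
    rw [posP]
    rw [← Finset.sum_subset T.subset_univ]
    · apply Finset.sum_congr rfl
      intro i hi
      have hi' := (Finset.mem_filter.1 hi).2
      rw [if_neg hi'.1, max_eq_left (by linarith [hi'.2])]
    · intro i _ hi
      simp only [hT, Finset.mem_filter, Finset.mem_univ, true_and, not_and, not_lt,
        not_not, ne_eq] at hi
      by_cases htop : g ((i : ℕ) + 1) = ⊤
      · rw [if_pos htop]
      · rw [if_neg htop, max_eq_right (by linarith [hi htop])]
  -- put it together
  have hkey : ((posP g z : ℝ) : EReal) ≤ ((⟪x', y⟫ : ℝ) : EReal) - fobj g x' := by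
    have hstep : ((⟪x', y⟫ : ℝ) : EReal) - fobj g x'
        ≥ ((⟪x', y⟫ : ℝ) : EReal) - (((R + ‖x'‖ ^ 2 : ℝ)) : EReal) :=
      EReal.sub_le_sub le_rfl hfobj
    refine le_trans ?_ hstep
    rw [← EReal.coe_sub, EReal.coe_le_coe_iff]
    have e1 : ⟪x', y⟫ = ∑ j ∈ T, 2 * z j ^ 2 := by
      rw [hinner, hsumT (fun j => 2 * z j ^ 2)]
    have e2 : ‖x'‖ ^ 2 = ∑ j ∈ T, z j ^ 2 := by
      rw [hnorm, hsumT (fun j => z j ^ 2)]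
    have e3 : ∑ j ∈ T, (2 : ℝ) * z j ^ 2 = 2 * ∑ j ∈ T, z j ^ 2 := by
      rw [Finset.mul_sum]
    have e4 : posP g z = ∑ j ∈ T, z j ^ 2 - R := by
      rw [hposP, Finset.sum_sub_distrib, hR]
    rw [e1, e2, e3, e4]
    ring_nf
    exact le_rfl
  exact hkey.trans (le_iSup (fun x0 : Evec n => ((⟪x0, y⟫ : ℝ) : EReal) - fobj g x0) x')

lemma inner_le_sorted (x y : Evec n) (z : Fin n → ℝ) (hz : Antitone z)
    (π : Equiv.Perm (Fin n)) (hy : ∀ i, |y i| = 2 * z (π i)) :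
    ⟪x, y⟫ ≤ 2 * ∑ j : Fin n, sortedAbs x ((j : ℕ) + 1) * z j := by
  classical
  set σ := Tuple.sort fun i : Fin n => -|x i| with hσ
  have hA : Antitone fun j : Fin n => |x (σ j)| := by
    intro i j hij
    have h := Tuple.monotone_sort (fun i : Fin n => -|x i|) hij
    simp only [Function.comp_apply] at h
    dsimp only
    linarith
  have step1 : ⟪x, y⟫ ≤ ∑ i : Fin n, |x i| * (2 * z (π i)) := by
    rw [inner_eq]
    apply Finset.sum_le_sum
    intro i _
    calc x i * y i ≤ |x i * y i| := le_abs_self _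
      _ = |x i| * |y i| := abs_mul _ _
      _ = |x i| * (2 * z (π i)) := by rw [hy i]
  have step2 : ∑ i : Fin n, |x i| * (2 * z (π i))
      = 2 * ∑ j : Fin n, |x (σ j)| * z (π (σ j)) := by
    rw [← Equiv.sum_comp σ (fun i => |x i| * (2 * z (π i)))]
    rw [Finset.mul_sum]
    apply Finset.sum_congr rfl
    intro j _
    ring
  have step3 : ∑ j : Fin n, |x (σ j)| * z (π (σ j)) ≤ ∑ j : Fin n, |x (σ j)| * z j := by
    have hmono : Monovary (fun j : Fin n => |x (σ j)|) z := hA.monovary hz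
    have := hmono.sum_smul_comp_perm_le_sum_smul (σ := (σ.trans π))
    simpa [smul_eq_mul] using this
  have step4 : ∑ j : Fin n, |x (σ j)| * z j
      = ∑ j : Fin n, sortedAbs x ((j : ℕ) + 1) * z j := by
    apply Finset.sum_congr rfl
    intro j _
    rw [sortedAbs_apply]
  calc ⟪x, y⟫ ≤ ∑ i : Fin n, |x i| * (2 * z (π i)) := step1
    _ = 2 * ∑ j : Fin n, |x (σ j)| * z (π (σ j)) := step2
    _ ≤ 2 * ∑ j : Fin n, |x (σ j)| * z j := by linarith
    _ = _ := by rw [step4]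

end BiconjAux

open BiconjAux in
/-- The biconjugate of `f(x) = G(card(x)) + ‖x‖²` satisfies
`f**(x) = sup { 2⟨x̃, z̃⟩ − Σ_i max(z̃_i² − g_i, 0) : z̃ nonincreasing, nonnegative }`,
where summands with `g_i = +∞` are interpreted as `0`. -/
theorem biconjugate_sup_representation
    {n : ℕ} (g : ℕ → ℝ≥0∞) (hg0 : g 0 = 0) (hgmono : Monotone g) (x : Evec n) :
    fbiconj g x =
      ⨆ z ∈ {z : Fin n → ℝ | (∀ i j : Fin n, i ≤ j → z j ≤ z i) ∧ ∀ i, 0 ≤ z i},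
        (((2 * ∑ i : Fin n, sortedAbs x ((i : ℕ) + 1) * z i
          - ∑ i : Fin n, if g ((i : ℕ) + 1) = ⊤ then (0 : ℝ)
              else max ((z i) ^ 2 - (g ((i : ℕ) + 1)).toReal) 0) : ℝ) : EReal) := by
  apply le_antisymm
  · rw [fbiconj]
    apply iSup_le
    intro y
    set σ := Tuple.sort fun i : Fin n => -|y i| with hσ
    set z : Fin n → ℝ := fun j => |y (σ j)| / 2 with hzdef
    have hz : Antitone z := by
      intro i j hij
      have h := Tuple.monotone_sort (fun i : Fin n => -|y i|) hij
      simp only [Function.comp_apply] at h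
      show |y (σ j)| / 2 ≤ |y (σ i)| / 2
      linarith
    have hz0 : ∀ i, 0 ≤ z i := fun i => by
      show 0 ≤ |y (σ i)| / 2
      positivity
    have hy : ∀ i, |y i| = 2 * z (σ.symm i) := by
      intro i
      show |y i| = 2 * (|y (σ (σ.symm i))| / 2)
      rw [Equiv.apply_symm_apply]
      ring
    have h1 := posP_le_fconj g hgmono y z hz hz0 σ.symm hy
    have h2 := inner_le_sorted x y z hz σ.symm hy
    have hzS : z ∈ {z : Fin n → ℝ | (∀ i j : Fin n, i ≤ j → z j ≤ z i) ∧ ∀ i, 0 ≤ z i} :=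
      ⟨fun i j hij => hz hij, hz0⟩
    calc ((⟪x, y⟫ : ℝ) : EReal) - fconj g y
        ≤ ((⟪x, y⟫ : ℝ) : EReal) - ((posP g z : ℝ) : EReal) := EReal.sub_le_sub le_rfl h1
      _ = (((⟪x, y⟫ - posP g z : ℝ)) : EReal) := by rw [EReal.coe_sub]
      _ ≤ (((2 * ∑ i : Fin n, sortedAbs x ((i : ℕ) + 1) * z i - posP g z : ℝ)) : EReal) := by
          rw [EReal.coe_le_coe_iff]; linarith
      _ ≤ _ := le_iSup₂_of_le z hzS le_rfl
  · apply iSup₂_le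
    intro z hzS
    obtain ⟨hz', hz0⟩ := hzS
    have hz : Antitone z := fun i j hij => hz' i j hij
    set σ := Tuple.sort fun i : Fin n => -|x i| with hσ
    set y : Evec n := WithLp.toLp 2
      (fun i => (2 * z (σ.symm i)) * (if x i < 0 then -1 else 1) : Fin n → ℝ) with hydef
    have hy : ∀ i, |y i| = 2 * z (σ.symm i) := by
      intro i
      show |(2 * z (σ.symm i)) * (if x i < 0 then -1 else 1)| = 2 * z (σ.symm i)
      rw [abs_mul]
      have h2 : (0 : ℝ) ≤ 2 * z (σ.symm i) := by have := hz0 (σ.symm i); linarith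
      rw [abs_of_nonneg h2]
      split <;> norm_num
    have h1 := fconj_le_posP g y z hz hz0 σ.symm hy
    have hinner : ⟪x, y⟫ = 2 * ∑ j : Fin n, sortedAbs x ((j : ℕ) + 1) * z j := by
      rw [inner_eq]
      rw [← Equiv.sum_comp σ (fun i => x i * y i)]
      rw [Finset.mul_sum]
      apply Finset.sum_congr rfl
      intro j _
      show x (σ j) * ((2 * z (σ.symm (σ j))) * (if x (σ j) < 0 then -1 else 1))
          = 2 * (sortedAbs x ((j : ℕ) + 1) * z j)
      rw [Equiv.symm_apply_apply, sortedAbs_apply]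
      by_cases hxneg : x (σ j) < 0
      · rw [if_pos hxneg, abs_of_neg hxneg]; ring
      · rw [if_neg hxneg, abs_of_nonneg (not_lt.1 hxneg)]; ring
    have hkey : (((2 * ∑ i : Fin n, sortedAbs x ((i : ℕ) + 1) * z i - posP g z : ℝ)) : EReal)
        ≤ ((⟪x, y⟫ : ℝ) : EReal) - fconj g y := by
      rw [← hinner, EReal.coe_sub]
      exact EReal.sub_le_sub le_rfl h1
    exact hkey.trans (le_iSup (fun y0 : Evec n => ((⟪x, y0⟫ : ℝ) : EReal) - fconj g y0) y)
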